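/- Let A be an n×n real matrix, B an n×m real matrix, Q a symmetric positive definite n×n real matrix, R a symmetric positive semidefinite m×m real matrix, and P a symmetric positive definite n×n real matrix such that R + BᵀPB is invertible and P satisfies the DARE, and let K = −(R + BᵀPB)⁻¹BᵀPA. Then the closed-loop system is asymptotically stable: for every x₀ ∈ ℝⁿ, (A + BK)ᵗ x₀ → 0 as t → ∞. -/

import Mathlib

open Matrix Filter

lemma quad_smul {n : ℕ} (c : ℝ) (x : Fin n → ℝ) (N : Matrix (Fin n) (Fin n) ℝ) :
    (c • x) ⬝ᵥ (N *ᵥ (c • x)) = c ^ 2 * (x ⬝ᵥ N *ᵥ x) := by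
  rw [mulVec_smul, dotProduct_smul, smul_dotProduct, smul_eq_mul, smul_eq_mul]; ring

/-- Quadratic form of a positive definite matrix dominates `c * ‖x‖ ^ 2`. -/
lemma posDef_quad_lower_bound {n : ℕ} {M : Matrix (Fin n) (Fin n) ℝ} (hM : M.PosDef) :
    ∃ c > 0, ∀ x : Fin n → ℝ, c * ‖x‖ ^ 2 ≤ x ⬝ᵥ M *ᵥ x := by
  have hf : Continuous fun x : Fin n → ℝ => x ⬝ᵥ M *ᵥ x :=
    continuous_id.dotProduct (continuous_const.matrix_mulVec continuous_id)
  rcases Nat.eq_zero_or_pos n with h0 | hpos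
  · subst h0
    refine ⟨1, one_pos, fun x => ?_⟩
    have hx : x = 0 := Subsingleton.elim _ _
    have h1 : ‖x‖ = 0 := by rw [hx, norm_zero]
    have h2 : x ⬝ᵥ M *ᵥ x = 0 := by rw [hx]; simp
    rw [h1, h2]; norm_num
  · haveI : Nonempty (Fin n) := Fin.pos_iff_nonempty.mp hpos
    have hne : (Metric.sphere (0 : Fin n → ℝ) 1).Nonempty :=
      NormedSpace.sphere_nonempty.mpr zero_le_one
    obtain ⟨u, hu, hmin⟩ :=
      (isCompact_sphere (0 : Fin n → ℝ) 1).exists_isMinOn hne hf.continuousOn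
    have hunorm : ‖u‖ = 1 := by simpa using hu
    have hune : u ≠ 0 := by
      intro h; rw [h, norm_zero] at hunorm; exact one_ne_zero hunorm.symm
    have hcpos : 0 < u ⬝ᵥ M *ᵥ u := by simpa using hM.dotProduct_mulVec_pos hune
    refine ⟨u ⬝ᵥ M *ᵥ u, hcpos, fun x => ?_⟩
    rcases eq_or_ne x 0 with rfl | hx
    · simp
    · have hxnorm : (0:ℝ) < ‖x‖ := norm_pos_iff.mpr hx
      have hvnorm : ‖(‖x‖⁻¹ • x : Fin n → ℝ)‖ = 1 := by
        rw [norm_smul, norm_inv, norm_norm, inv_mul_cancel₀ hxnorm.ne']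
      have hvmem : (‖x‖⁻¹ • x : Fin n → ℝ) ∈ Metric.sphere (0 : Fin n → ℝ) 1 := by
        simpa using hvnorm
      have hle : u ⬝ᵥ M *ᵥ u ≤ (‖x‖⁻¹ • x) ⬝ᵥ M *ᵥ (‖x‖⁻¹ • x) := hmin hvmem
      have hxv : (‖x‖ : ℝ) • (‖x‖⁻¹ • x) = x := by
        rw [smul_smul, mul_inv_cancel₀ hxnorm.ne', one_smul]
      have hquad : x ⬝ᵥ M *ᵥ x = ‖x‖ ^ 2 * ((‖x‖⁻¹ • x) ⬝ᵥ M *ᵥ (‖x‖⁻¹ • x)) := by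
        conv_lhs => rw [← hxv]
        rw [quad_smul]
      rw [hquad]
      have h2 : (0:ℝ) ≤ ‖x‖ ^ 2 := sq_nonneg _
      nlinarith [hle, h2]

lemma quad_transpose_mul {n m : ℕ} (M : Matrix (Fin m) (Fin n) ℝ)
    (N : Matrix (Fin m) (Fin m) ℝ) (x : Fin n → ℝ) :
    (M *ᵥ x) ⬝ᵥ (N *ᵥ (M *ᵥ x)) = x ⬝ᵥ ((Mᵀ * N * M) *ᵥ x) := by
  rw [dotProduct_mulVec, vecMul_mulVec, dotProduct_mulVec, vecMul_vecMul, Matrix.mul_assoc,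
    ← dotProduct_mulVec]

theorem dare_closed_loop_asymptotically_stable {n m : ℕ}
    (A : Matrix (Fin n) (Fin n) ℝ) (B : Matrix (Fin n) (Fin m) ℝ)
    (Q P : Matrix (Fin n) (Fin n) ℝ) (R : Matrix (Fin m) (Fin m) ℝ)
    (hQ : Q.PosDef) (hR : R.PosSemidef) (hP : P.PosDef)
    (hinv : IsUnit (R + Bᵀ * P * B))
    (hDARE : P = Aᵀ * P * A - Aᵀ * P * B * (R + Bᵀ * P * B)⁻¹ * (Bᵀ * P * A) + Q)
    (K : Matrix (Fin m) (Fin n) ℝ)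
    (hK : K = -((R + Bᵀ * P * B)⁻¹ * (Bᵀ * P * A))) :
    ∀ x₀ : Fin n → ℝ,
      Tendsto (fun t : ℕ => ((A + B * K) ^ t).mulVec x₀) atTop (nhds 0) := by
  set S : Matrix (Fin m) (Fin m) ℝ := R + Bᵀ * P * B with hS
  set T : Matrix (Fin m) (Fin n) ℝ := Bᵀ * P * A with hT
  have hPt : Pᵀ = P := by simpa using hP.isHermitian.eq
  have hRt : Rᵀ = R := by simpa using hR.isHermitian.eq
  have hdet : IsUnit S.det := (Matrix.isUnit_iff_isUnit_det S).mp hinv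
  have hSK : S * K = -T := by
    rw [hK, Matrix.mul_neg, ← Matrix.mul_assoc, Matrix.mul_nonsing_inv _ hdet, Matrix.one_mul]
  have hTt : Tᵀ = Aᵀ * P * B := by
    rw [hT, Matrix.transpose_mul, Matrix.transpose_mul, transpose_transpose, hPt,
      Matrix.mul_assoc]
  -- the Lyapunov identity
  have key : (A + B * K)ᵀ * P * (A + B * K) + Kᵀ * R * K
      = Aᵀ * P * A + Tᵀ * K + (Kᵀ * T + Kᵀ * (S * K)) := by
    rw [hS, hT, hTt, Matrix.transpose_add, Matrix.transpose_mul]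
    simp only [Matrix.add_mul, Matrix.mul_add, Matrix.mul_assoc]
    abel
  have hcancel : Kᵀ * T + Kᵀ * (S * K) = 0 := by
    rw [hSK, Matrix.mul_neg, add_neg_cancel]
  have hTK : Tᵀ * K = -(Aᵀ * P * B * S⁻¹ * T) := by
    rw [hK, Matrix.mul_neg, hTt]
    simp [Matrix.mul_assoc]
  have hlyap : P = (A + B * K)ᵀ * P * (A + B * K) + Kᵀ * R * K + Q := by
    rw [key, hcancel, add_zero, hTK]
    conv_lhs => rw [hDARE]
    rw [sub_eq_add_neg]
  intro x₀
  set M : Matrix (Fin n) (Fin n) ℝ := A + B * K with hM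
  have hquadstep : ∀ x : Fin n → ℝ, x ⬝ᵥ P *ᵥ x
      = (M *ᵥ x) ⬝ᵥ P *ᵥ (M *ᵥ x) + (K *ᵥ x) ⬝ᵥ R *ᵥ (K *ᵥ x) + x ⬝ᵥ Q *ᵥ x := by
    intro x
    conv_lhs => rw [hlyap]
    rw [add_mulVec, add_mulVec, dotProduct_add, dotProduct_add,
      ← quad_transpose_mul, ← quad_transpose_mul]
  set xs : ℕ → (Fin n → ℝ) := fun t => (M ^ t) *ᵥ x₀ with hxs
  have hstep : ∀ t, xs (t + 1) = M *ᵥ xs t := by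
    intro t
    show (M ^ (t+1)) *ᵥ x₀ = M *ᵥ ((M ^ t) *ᵥ x₀)
    rw [pow_succ', ← mulVec_mulVec]
  set a : ℕ → ℝ := fun t => xs t ⬝ᵥ P *ᵥ xs t with ha
  set q : ℕ → ℝ := fun t => xs t ⬝ᵥ Q *ᵥ xs t with hq
  set r : ℕ → ℝ := fun t => (K *ᵥ xs t) ⬝ᵥ R *ᵥ (K *ᵥ xs t) with hr
  have hdecomp : ∀ t, a t = a (t + 1) + r t + q t := by
    intro t
    show xs t ⬝ᵥ P *ᵥ xs t
      = xs (t+1) ⬝ᵥ P *ᵥ xs (t+1) + (K *ᵥ xs t) ⬝ᵥ R *ᵥ (K *ᵥ xs t) + xs t ⬝ᵥ Q *ᵥ xs t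
    rw [hstep t]
    exact hquadstep (xs t)
  have hq_nonneg : ∀ t, 0 ≤ q t := by
    intro t
    have h := hQ.posSemidef.dotProduct_mulVec_nonneg (xs t)
    simpa using h
  have hr_nonneg : ∀ t, 0 ≤ r t := by
    intro t
    have h := hR.dotProduct_mulVec_nonneg (K *ᵥ xs t)
    show (0:ℝ) ≤ (K *ᵥ xs t) ⬝ᵥ R *ᵥ (K *ᵥ xs t)
    simpa using h
  have ha_nonneg : ∀ t, 0 ≤ a t := by
    intro t
    have h := hP.posSemidef.dotProduct_mulVec_nonneg (xs t)
    simpa using h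
  have ha_anti : Antitone a := by
    apply antitone_nat_of_succ_le
    intro t
    have := hdecomp t
    nlinarith [hq_nonneg t, hr_nonneg t]
  have hbdd : BddBelow (Set.range a) := ⟨0, by rintro _ ⟨t, rfl⟩; exact ha_nonneg t⟩
  have ha_lim : Tendsto a atTop (nhds (⨅ t, a t)) := tendsto_atTop_ciInf ha_anti hbdd
  have ha_lim' : Tendsto (fun t => a (t + 1)) atTop (nhds (⨅ t, a t)) :=
    ha_lim.comp (tendsto_add_atTop_nat 1)
  have hdiff : Tendsto (fun t => a t - a (t + 1)) atTop (nhds 0) := by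
    have := ha_lim.sub ha_lim'
    simpa using this
  have hq_lim : Tendsto q atTop (nhds 0) := by
    apply squeeze_zero hq_nonneg (fun t => ?_) hdiff
    have := hdecomp t
    nlinarith [hr_nonneg t]
  obtain ⟨c, hc, hcle⟩ := posDef_quad_lower_bound hQ
  have hnorm_sq : Tendsto (fun t => ‖xs t‖ ^ 2) atTop (nhds 0) := by
    apply squeeze_zero (fun t => sq_nonneg _) (fun t => ?_)
      (by simpa using hq_lim.const_mul c⁻¹)
    show ‖xs t‖ ^ 2 ≤ c⁻¹ * (xs t ⬝ᵥ Q *ᵥ xs t)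
    rw [le_inv_mul_iff₀ hc]
    exact hcle (xs t)
  have hnorm : Tendsto (fun t => ‖xs t‖) atTop (nhds 0) := by
    have hsqrt := (Real.continuous_sqrt.tendsto 0).comp hnorm_sq
    simp only [Function.comp_def, Real.sqrt_zero] at hsqrt
    convert hsqrt using 2 with t
    rw [Real.sqrt_sq (norm_nonneg _)]
  exact tendsto_zero_iff_norm_tendsto_zero.mpr hnorm
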